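/- With A_T as defined, the (1,1) entry of A_T⁻¹ equals 2/(1 + β²(T-1)). -/

import Mathlib

open Finset

lemma sum_Icc_range (f : ℕ → ℝ) (a b : ℕ) :
    ∑ i ∈ Icc a b, f i = ∑ m ∈ range (b + 1 - a), f (a + m) := by
  rw [← Finset.Ico_add_one_right_eq_Icc, Finset.sum_Ico_eq_sum_range]

lemma Icc_split (f : ℕ → ℝ) (a b c : ℕ) (h0 : 1 ≤ b) (h1 : a ≤ b) (h2 : b ≤ c + 1) :
    ∑ k ∈ Icc a c, f k = (∑ k ∈ Icc a (b - 1), f k) + ∑ k ∈ Icc b c, f k := by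
  rw [← Finset.sum_union]
  · congr 1
    ext x
    simp only [Finset.mem_union, Finset.mem_Icc]
    omega
  · simp only [Finset.disjoint_left, Finset.mem_Icc]
    omega

lemma Icc_top (f : ℕ → ℝ) (a b : ℕ) (h : a ≤ b) (hb : 1 ≤ b) :
    ∑ k ∈ Icc a b, f k = (∑ k ∈ Icc a (b - 1), f k) + f b := by
  rw [Icc_split f a b b hb h (by omega), Finset.Icc_self, Finset.sum_singleton]

lemma Icc_bot (f : ℕ → ℝ) (a b : ℕ) (h : a ≤ b) :
    ∑ k ∈ Icc a b, f k = f a + ∑ k ∈ Icc (a + 1) b, f k := by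
  rw [Finset.Icc_eq_cons_Ioc h, Finset.sum_cons, Finset.Icc_add_one_left_eq_Ioc]

lemma tri_comm (lo hi : ℕ) (g : ℕ → ℕ → ℝ) :
    ∑ k ∈ Icc lo hi, ∑ j ∈ Icc k hi, g k j
      = ∑ j ∈ Icc lo hi, ∑ k ∈ Icc lo j, g k j := by
  have h := Finset.sum_Ico_Ico_comm lo (hi + 1) g
  simpa only [Finset.Ico_add_one_right_eq_Icc] using h

lemma geomIcc (α : ℝ) (a b : ℕ) :
    (α - 1) * ∑ k ∈ Icc a b, α ^ (b - k) = α ^ (b + 1 - a) - 1 := by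
  rw [sum_Icc_range]
  have hc : ∑ m ∈ range (b+1-a), α ^ (b - (a + m)) = ∑ m ∈ range (b+1-a), α ^ (b+1-a-1-m) :=
    Finset.sum_congr rfl (fun m hm => by
      rw [Finset.mem_range] at hm
      congr 1
      omega)
  rw [hc]
  rw [Finset.sum_range_reflect (fun m => α ^ m) (b + 1 - a)]
  rw [mul_comm, geom_sum_mul]


/-- θ_j^T = (T+1-j) - (T-j)α. -/
noncomputable def theta (α : ℝ) (T j : ℕ) : ℝ := ((T : ℝ) + 1 - j) - ((T : ℝ) - j) * α

lemma theta_shift (α : ℝ) (T j : ℕ) : theta α (T + 1) (j + 1) = theta α T j := by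
  unfold theta; push_cast; ring

lemma theta_last (α : ℝ) (T : ℕ) : theta α T T = 1 := by
  unfold theta; ring

lemma theta_eq (α : ℝ) (T i : ℕ) (h : i ≤ T) :
    theta α T i = 1 - (α - 1) * ((T : ℝ) - i) := by
  unfold theta; ring

lemma Gsum (α : ℝ) (T i : ℕ) (hT : 1 ≤ T) (hi : i ≤ T) :
    ∑ j ∈ Icc i (T - 1), theta α T (j + 1) * α ^ (j - i) = (T : ℝ) - i := by
  rw [sum_Icc_range, show T - 1 + 1 - i = T - i by omega]
  set n := T - i with hn
  have hTn : (T : ℝ) = (i : ℝ) + (n : ℝ) := by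
    rw [hn]; push_cast [Nat.cast_sub hi]; ring
  have key : ∀ m, theta α T (i + m + 1) * α ^ (i + m - i)
      = (fun m : ℕ => ((n : ℝ) - m) * α ^ m) m - (fun m : ℕ => ((n : ℝ) - m) * α ^ m) (m + 1) := by
    intro m
    simp only [Nat.add_sub_cancel_left]
    unfold theta
    push_cast
    rw [hTn]
    ring
  rw [Finset.sum_congr rfl (fun m _ => key m), Finset.sum_range_sub']
  simp [hTn]

/-- Entry a_{ik} of the matrix A_T, for 1-based indices with k ≤ i. -/
noncomputable def entryLow (α : ℝ) (T i k : ℕ) : ℝ :=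
  if i = k then
    (if i = T then (1 : ℝ) / 2
     else 1 / 2 + (α - 1) ^ 2 * ∑ j ∈ Finset.Icc i (T - 1), theta α T (j + 1) * α ^ (2 * j - 2 * i))
  else if i = T then (α - 1) * α ^ (T - k - 1) / 2
  else (α - 1) * theta α T i * α ^ (i - k - 1) / 2
        + (α - 1) ^ 2 * ∑ j ∈ Finset.Icc i (T - 1), theta α T (j + 1) * α ^ (2 * j - i - k)

/-- Entry a_{ik} of A_T (extended symmetrically), 1-based indices. -/
noncomputable def entryA (α : ℝ) (T i k : ℕ) : ℝ :=
  if k ≤ i then entryLow α T i k else entryLow α T k i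

lemma entryLow_shift (α : ℝ) (T i k : ℕ) (hk : 1 ≤ k) (hki : k ≤ i) (hiT : i ≤ T) :
    entryLow α (T + 1) (i + 1) (k + 1) = entryLow α T i k := by
  unfold entryLow
  by_cases hik : i = k
  · rw [if_pos (by omega : i + 1 = k + 1), if_pos hik]
    by_cases hT : i = T
    · rw [if_pos (by omega : i + 1 = T + 1), if_pos hT]
    · rw [if_neg (by omega : ¬ i + 1 = T + 1), if_neg hT]
      congr 2
      rw [sum_Icc_range, sum_Icc_range, show T + 1 - 1 + 1 - (i + 1) = T - 1 + 1 - i by omega]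
      refine Finset.sum_congr rfl (fun m hm => ?_)
      rw [Finset.mem_range] at hm
      rw [show i + 1 + m + 1 = (i + m + 1) + 1 by omega, theta_shift]
      congr 1
      congr 1
      omega
  · by_cases hT : i = T
    · rw [if_neg (by omega : ¬ i + 1 = k + 1), if_pos (by omega : i + 1 = T + 1),
        if_neg hik, if_pos hT]
      rw [show T + 1 - (k + 1) - 1 = T - k - 1 from by omega]
    · rw [if_neg (by omega : ¬ i + 1 = k + 1), if_neg (by omega : ¬ i + 1 = T + 1),
        if_neg hik, if_neg hT, theta_shift,
        show i + 1 - (k + 1) - 1 = i - k - 1 from by omega]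
      congr 2
      · rw [sum_Icc_range, sum_Icc_range, show T + 1 - 1 + 1 - (i + 1) = T - 1 + 1 - i by omega]
        refine Finset.sum_congr rfl (fun m hm => ?_)
        rw [Finset.mem_range] at hm
        rw [show i + 1 + m + 1 = (i + m + 1) + 1 by omega, theta_shift]
        congr 1
        congr 1
        omega

lemma entryA_shift (α : ℝ) (T i k : ℕ) (hk : 1 ≤ k) (hi : 1 ≤ i) (hkT : k ≤ T) (hiT : i ≤ T) :
    entryA α (T + 1) (i + 1) (k + 1) = entryA α T i k := by
  unfold entryA
  by_cases h : k ≤ i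
  · rw [if_pos (by omega : k + 1 ≤ i + 1), if_pos h, entryLow_shift α T i k hk h hiT]
  · rw [if_neg (by omega : ¬ k + 1 ≤ i + 1), if_neg h,
      entryLow_shift α T k i hi (by omega) hkT]

lemma rowS_last (α : ℝ) (T : ℕ) (h2 : 2 ≤ T) :
    entryA α T T 1 + (1 - α) * (∑ k ∈ Icc 2 T, entryA α T T k) = 0 := by
  have hAT1 : entryA α T T 1 = (α - 1) * α ^ (T - 2) / 2 := by
    unfold entryA entryLow
    rw [if_pos (by omega : 1 ≤ T), if_neg (by omega : ¬ T = 1), if_pos rfl,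
      show T - 1 - 1 = T - 2 from by omega]
  have hdiag : entryA α T T T = 1 / 2 := by
    unfold entryA entryLow
    simp
  have hothers : ∀ k ∈ Icc 2 (T - 1), entryA α T T k = (α - 1) / 2 * α ^ (T - 1 - k) := by
    intro k hk
    rw [Finset.mem_Icc] at hk
    unfold entryA entryLow
    rw [if_pos (by omega : k ≤ T), if_neg (by omega : ¬ T = k), if_pos rfl,
      show T - k - 1 = T - 1 - k from by omega]
    ring
  have hsplit : ∑ k ∈ Icc 2 T, entryA α T T k
      = (∑ k ∈ Icc 2 (T - 1), entryA α T T k) + entryA α T T T :=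
    Icc_top _ 2 T (by omega) (by omega)
  have hsum2 : ∑ k ∈ Icc 2 (T - 1), entryA α T T k
      = (α - 1) / 2 * ∑ k ∈ Icc 2 (T - 1), α ^ (T - 1 - k) := by
    rw [Finset.mul_sum]
    exact Finset.sum_congr rfl hothers
  have hgeo := geomIcc α 2 (T - 1)
  rw [show T - 1 + 1 - 2 = T - 2 from by omega] at hgeo
  rw [hAT1, hsplit, hsum2, hdiag]
  linear_combination ((1 - α) / 2) * hgeo

lemma rowS_first (α : ℝ) (T : ℕ) (h2 : 2 ≤ T) :
    entryA α T 1 1 + (1 - α) * (∑ k ∈ Icc 2 T, entryA α T 1 k)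
      = (1 + (α - 1) ^ 2 * ((T : ℝ) - 1)) / 2 := by
  set D := ∑ j ∈ Icc 1 (T - 1), theta α T (j + 1) * α ^ (2 * j - 2) with hD
  set G := ∑ j ∈ Icc 1 (T - 1), theta α T (j + 1) * α ^ (j - 1) with hGdef
  set P := ∑ k ∈ Icc 2 (T - 1), theta α T k * α ^ (k - 2) with hPdef
  set Q := ∑ k ∈ Icc 2 (T - 1), ∑ j ∈ Icc k (T - 1), theta α T (j + 1) * α ^ (2 * j - k - 1)
    with hQdef
  set DD := ∑ j ∈ Icc 2 (T - 1), theta α T (j + 1) * α ^ (2 * j - 2) with hDDdef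
  set GG := ∑ j ∈ Icc 2 (T - 1), theta α T (j + 1) * α ^ (j - 1) with hGGdef
  have hA11 : entryA α T 1 1 = 1 / 2 + (α - 1) ^ 2 * D := by
    unfold entryA entryLow
    rw [if_pos le_rfl, if_pos rfl, if_neg (by omega : ¬ 1 = T)]
  have hATop : entryA α T 1 T = (α - 1) * α ^ (T - 2) / 2 := by
    unfold entryA entryLow
    rw [if_neg (by omega : ¬ T ≤ 1), if_neg (by omega : ¬ T = 1), if_pos rfl,
      show T - 1 - 1 = T - 2 from by omega]
  have hk : ∀ k ∈ Icc 2 (T - 1), entryA α T 1 k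
      = (α - 1) * theta α T k * α ^ (k - 2) / 2
        + (α - 1) ^ 2 * ∑ j ∈ Icc k (T - 1), theta α T (j + 1) * α ^ (2 * j - k - 1) := by
    intro k hk0
    rw [Finset.mem_Icc] at hk0
    unfold entryA entryLow
    rw [if_neg (by omega : ¬ k ≤ 1), if_neg (by omega : ¬ k = 1), if_neg (by omega : ¬ k = T),
      show k - 1 - 1 = k - 2 from by omega]
  have hsplit : ∑ k ∈ Icc 2 T, entryA α T 1 k
      = (∑ k ∈ Icc 2 (T - 1), entryA α T 1 k) + entryA α T 1 T :=
    Icc_top _ 2 T (by omega) (by omega)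
  have hsum : ∑ k ∈ Icc 2 (T - 1), entryA α T 1 k = (α - 1) / 2 * P + (α - 1) ^ 2 * Q := by
    rw [Finset.sum_congr rfl hk, Finset.sum_add_distrib]
    congr 1
    · rw [hPdef, Finset.mul_sum]
      exact Finset.sum_congr rfl (fun k _ => by ring)
    · rw [hQdef, Finset.mul_sum]
  have hG : G = (T : ℝ) - 1 := by
    have h := Gsum α T 1 (by omega) (by omega)
    rw [hGdef]
    simpa using h
  have hP : P = G - α ^ (T - 2) := by
    have hGt : G = (∑ j ∈ Icc 1 (T - 1 - 1), theta α T (j + 1) * α ^ (j - 1))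
        + theta α T (T - 1 + 1) * α ^ (T - 1 - 1) :=
      Icc_top _ 1 (T - 1) (by omega) (by omega)
    rw [show T - 1 + 1 = T from by omega, theta_last,
      show T - 1 - 1 = T - 2 from by omega, one_mul] at hGt
    have hPr : P = ∑ j ∈ Icc 1 (T - 2), theta α T (j + 1) * α ^ (j - 1) := by
      rw [hPdef, sum_Icc_range, sum_Icc_range, show T - 2 + 1 - 1 = T - 1 + 1 - 2 from by omega]
      refine Finset.sum_congr rfl (fun m hm => ?_)
      rw [show 1 + m + 1 = 2 + m from by omega, show 1 + m - 1 = 2 + m - 2 from by omega]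
    rw [hPr, hGt]
    ring
  have hQ : (α - 1) * Q = DD - GG := by
    have ht : Q = ∑ j ∈ Icc 2 (T - 1), ∑ k ∈ Icc 2 j, theta α T (j + 1) * α ^ (2 * j - k - 1) :=
      tri_comm 2 (T - 1) _
    have hper : ∀ j ∈ Icc 2 (T - 1),
        (α - 1) * ∑ k ∈ Icc 2 j, theta α T (j + 1) * α ^ (2 * j - k - 1)
          = theta α T (j + 1) * (α ^ (2 * j - 2) - α ^ (j - 1)) := by
      intro j hj
      rw [Finset.mem_Icc] at hj
      have e1 : ∀ k ∈ Icc 2 j, theta α T (j + 1) * α ^ (2 * j - k - 1)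
          = theta α T (j + 1) * α ^ (j - 1) * α ^ (j - k) := by
        intro k hk0
        rw [Finset.mem_Icc] at hk0
        rw [mul_assoc, ← pow_add]
        congr 2
        omega
      rw [Finset.sum_congr rfl e1, ← Finset.mul_sum]
      have hg := geomIcc α 2 j
      rw [show j + 1 - 2 = j - 1 from by omega] at hg
      have hp : α ^ (j - 1) * α ^ (j - 1) = α ^ (2 * j - 2) := by
        rw [← pow_add]
        congr 1
        omega
      linear_combination (theta α T (j + 1) * α ^ (j - 1)) * hg + theta α T (j + 1) * hp
    rw [ht, Finset.mul_sum, Finset.sum_congr rfl hper, hDDdef, hGGdef, ← Finset.sum_sub_distrib]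
    exact Finset.sum_congr rfl (fun j _ => by ring)
  have hDDD : D = theta α T 2 + DD := by
    have h := Icc_bot (fun j => theta α T (j + 1) * α ^ (2 * j - 2)) 1 (T - 1) (by omega)
    rw [hD, hDDdef]
    simpa using h
  have hGGG : G = theta α T 2 + GG := by
    have h := Icc_bot (fun j => theta α T (j + 1) * α ^ (j - 1)) 1 (T - 1) (by omega)
    rw [hGdef, hGGdef]
    simpa using h
  rw [hA11, hsplit, hsum, hATop]
  linear_combination (-(α - 1) ^ 2 / 2) * hP + (-(α - 1) ^ 2) * hQ
    + ((α - 1) ^ 2) * hDDD + (-(α - 1) ^ 2) * hGGG + ((α - 1) ^ 2 / 2) * hG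

lemma rowS_mid (α : ℝ) (T i : ℕ) (hi : 2 ≤ i) (hiT : i ≤ T - 1) (hT : 3 ≤ T) :
    entryA α T i 1 + (1 - α) * (∑ k ∈ Icc 2 T, entryA α T i k) = 0 := by
  set D := ∑ j ∈ Icc i (T - 1), theta α T (j + 1) * α ^ (2 * j - 2 * i) with hDdef
  set G := ∑ j ∈ Icc i (T - 1), theta α T (j + 1) * α ^ (j - i) with hGdef
  set D' := ∑ j ∈ Icc (i + 1) (T - 1), theta α T (j + 1) * α ^ (2 * j - 2 * i) with hD'def
  set G' := ∑ j ∈ Icc (i + 1) (T - 1), theta α T (j + 1) * α ^ (j - i) with hG'def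
  set g1 := ∑ k ∈ Icc 2 (i - 1), α ^ (i - 1 - k) with hg1def
  set P := ∑ k ∈ Icc (i + 1) (T - 1), theta α T k * α ^ (k - i - 1) with hPdef
  set Q := ∑ k ∈ Icc (i + 1) (T - 1), ∑ j ∈ Icc k (T - 1), theta α T (j + 1) * α ^ (2 * j - k - i)
    with hQdef
  have hAi1 : entryA α T i 1
      = (α - 1) * theta α T i * α ^ (i - 2) / 2 + (α - 1) ^ 2 * (D * α ^ (i - 1)) := by
    unfold entryA entryLow
    rw [if_pos (by omega : 1 ≤ i), if_neg (by omega : ¬ i = 1), if_neg (by omega : ¬ i = T),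
      show i - 1 - 1 = i - 2 from by omega]
    have hs : ∑ j ∈ Icc i (T - 1), theta α T (j + 1) * α ^ (2 * j - i - 1)
        = D * α ^ (i - 1) := by
      rw [hDdef, Finset.sum_mul]
      refine Finset.sum_congr rfl (fun j hj => ?_)
      rw [Finset.mem_Icc] at hj
      rw [mul_assoc, ← pow_add]
      congr 2
      omega
    rw [hs]
  have hdiag : entryA α T i i = 1 / 2 + (α - 1) ^ 2 * D := by
    unfold entryA entryLow
    rw [if_pos le_rfl, if_pos rfl, if_neg (by omega : ¬ i = T)]
  have hlowk : ∀ k ∈ Icc 2 (i - 1), entryA α T i k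
      = ((α - 1) * theta α T i / 2 + (α - 1) ^ 2 * (D * α)) * α ^ (i - 1 - k) := by
    intro k hk0
    rw [Finset.mem_Icc] at hk0
    unfold entryA entryLow
    rw [if_pos (by omega : k ≤ i), if_neg (by omega : ¬ i = k), if_neg (by omega : ¬ i = T),
      show i - k - 1 = i - 1 - k from by omega]
    have hs : ∑ j ∈ Icc i (T - 1), theta α T (j + 1) * α ^ (2 * j - i - k)
        = D * (α * α ^ (i - 1 - k)) := by
      rw [hDdef, Finset.sum_mul]
      refine Finset.sum_congr rfl (fun j hj => ?_)
      rw [Finset.mem_Icc] at hj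
      rw [mul_assoc, ← pow_succ', ← pow_add]
      congr 2
      omega
    rw [hs]
    ring
  have hupk : ∀ k ∈ Icc (i + 1) (T - 1), entryA α T i k
      = (α - 1) * theta α T k * α ^ (k - i - 1) / 2
        + (α - 1) ^ 2 * ∑ j ∈ Icc k (T - 1), theta α T (j + 1) * α ^ (2 * j - k - i) := by
    intro k hk0
    rw [Finset.mem_Icc] at hk0
    unfold entryA entryLow
    rw [if_neg (by omega : ¬ k ≤ i), if_neg (by omega : ¬ k = i), if_neg (by omega : ¬ k = T)]
  have hAiT : entryA α T i T = (α - 1) * α ^ (T - 1 - i) / 2 := by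
    unfold entryA entryLow
    rw [if_neg (by omega : ¬ T ≤ i), if_neg (by omega : ¬ T = i), if_pos rfl,
      show T - i - 1 = T - 1 - i from by omega]
  have hs1 : ∑ k ∈ Icc 2 T, entryA α T i k
      = (∑ k ∈ Icc 2 (T - 1), entryA α T i k) + entryA α T i T :=
    Icc_top _ 2 T (by omega) (by omega)
  have hs2 : ∑ k ∈ Icc 2 (T - 1), entryA α T i k
      = (∑ k ∈ Icc 2 (i - 1), entryA α T i k) + ∑ k ∈ Icc i (T - 1), entryA α T i k :=
    Icc_split _ 2 i (T - 1) (by omega) hi (by omega)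
  have hs3 : ∑ k ∈ Icc i (T - 1), entryA α T i k
      = entryA α T i i + ∑ k ∈ Icc (i + 1) (T - 1), entryA α T i k :=
    Icc_bot _ i (T - 1) hiT
  have hlow : ∑ k ∈ Icc 2 (i - 1), entryA α T i k
      = ((α - 1) * theta α T i / 2 + (α - 1) ^ 2 * (D * α)) * g1 := by
    rw [Finset.sum_congr rfl hlowk, hg1def, Finset.mul_sum]
  have hup : ∑ k ∈ Icc (i + 1) (T - 1), entryA α T i k
      = (α - 1) / 2 * P + (α - 1) ^ 2 * Q := by
    rw [Finset.sum_congr rfl hupk, Finset.sum_add_distrib]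
    congr 1
    · rw [hPdef, Finset.mul_sum]
      exact Finset.sum_congr rfl (fun k _ => by ring)
    · rw [hQdef, Finset.mul_sum]
  have hgeo1 : (α - 1) * g1 = α ^ (i - 2) - 1 := by
    have h := geomIcc α 2 (i - 1)
    rw [show i - 1 + 1 - 2 = i - 2 from by omega] at h
    exact h
  have hG : G = (T : ℝ) - i := Gsum α T i (by omega) (by omega)
  have hP : P = G - α ^ (T - 1 - i) := by
    have hGt : G = (∑ j ∈ Icc i (T - 1 - 1), theta α T (j + 1) * α ^ (j - i))
        + theta α T (T - 1 + 1) * α ^ (T - 1 - i) :=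
      Icc_top _ i (T - 1) hiT (by omega)
    rw [show T - 1 + 1 = T from by omega, theta_last, one_mul] at hGt
    have hPr : P = ∑ j ∈ Icc i (T - 1 - 1), theta α T (j + 1) * α ^ (j - i) := by
      rw [hPdef, sum_Icc_range, sum_Icc_range,
        show T - 1 - 1 + 1 - i = T - 1 + 1 - (i + 1) from by omega]
      refine Finset.sum_congr rfl (fun m hm => ?_)
      rw [show i + 1 + m = i + m + 1 from by omega,
        show i + m + 1 - i - 1 = i + m - i from by omega]
    rw [hPr, hGt]
    ring
  have hQ : (α - 1) * Q = D' - G' := by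
    have ht : Q = ∑ j ∈ Icc (i + 1) (T - 1), ∑ k ∈ Icc (i + 1) j,
        theta α T (j + 1) * α ^ (2 * j - k - i) := tri_comm (i + 1) (T - 1) _
    have hper : ∀ j ∈ Icc (i + 1) (T - 1),
        (α - 1) * ∑ k ∈ Icc (i + 1) j, theta α T (j + 1) * α ^ (2 * j - k - i)
          = theta α T (j + 1) * (α ^ (2 * j - 2 * i) - α ^ (j - i)) := by
      intro j hj
      rw [Finset.mem_Icc] at hj
      have e1 : ∀ k ∈ Icc (i + 1) j, theta α T (j + 1) * α ^ (2 * j - k - i)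
          = theta α T (j + 1) * α ^ (j - i) * α ^ (j - k) := by
        intro k hk0
        rw [Finset.mem_Icc] at hk0
        rw [mul_assoc, ← pow_add]
        congr 2
        omega
      rw [Finset.sum_congr rfl e1, ← Finset.mul_sum]
      have hg := geomIcc α (i + 1) j
      rw [show j + 1 - (i + 1) = j - i from by omega] at hg
      have hp : α ^ (j - i) * α ^ (j - i) = α ^ (2 * j - 2 * i) := by
        rw [← pow_add]
        congr 1
        omega
      linear_combination (theta α T (j + 1) * α ^ (j - i)) * hg + theta α T (j + 1) * hp
    rw [ht, Finset.mul_sum, Finset.sum_congr rfl hper, hD'def, hG'def, ← Finset.sum_sub_distrib]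
    exact Finset.sum_congr rfl (fun j _ => by ring)
  have hDD' : D = theta α T (i + 1) + D' := by
    have h := Icc_bot (fun j => theta α T (j + 1) * α ^ (2 * j - 2 * i)) i (T - 1) hiT
    rw [hDdef, hD'def]
    simpa using h
  have hGG' : G = theta α T (i + 1) + G' := by
    have h := Icc_bot (fun j => theta α T (j + 1) * α ^ (j - i)) i (T - 1) hiT
    rw [hGdef, hG'def]
    simpa using h
  have hth : theta α T i = 1 - (α - 1) * ((T : ℝ) - i) := theta_eq α T i (by omega)
  have hpw : α ^ (i - 2) * α = α ^ (i - 1) := by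
    rw [← pow_succ]
    congr 1
    omega
  rw [hAi1, hs1, hs2, hs3, hlow, hup, hdiag, hAiT]
  linear_combination (-((α - 1) * theta α T i / 2 + (α - 1) ^ 2 * (D * α))) * hgeo1
    + (-(α - 1) ^ 2 / 2) * hP + (-(α - 1) ^ 2) * hQ + (-(α - 1) ^ 2 * D) * hpw
    + ((α - 1) ^ 2) * hDD' + (-(α - 1) ^ 2) * hGG' + ((α - 1) ^ 2 / 2) * hG
    + ((α - 1) / 2) * hth

lemma rowS (α : ℝ) (T i : ℕ) (h1 : 1 ≤ i) (h2 : i ≤ T) :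
    entryA α T i 1 + (1 - α) * (∑ k ∈ Icc 2 T, entryA α T i k)
      = if i = 1 then (1 + (α - 1) ^ 2 * ((T : ℝ) - 1)) / 2 else 0 := by
  by_cases hi1 : i = 1
  · subst hi1
    rw [if_pos rfl]
    by_cases hT1 : T = 1
    · subst hT1
      rw [show Icc 2 1 = (∅ : Finset ℕ) from by rfl, Finset.sum_empty]
      unfold entryA entryLow
      norm_num
    · exact rowS_first α T (by omega)
  · rw [if_neg hi1]
    by_cases hiT : i = T
    · subst hiT
      exact rowS_last α i (by omega)
    · exact rowS_mid α T i (by omega) (by omega) (by omega)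

/-- The symmetric T×T matrix A_T. -/
noncomputable def Amat (α : ℝ) (T : ℕ) : Matrix (Fin T) (Fin T) ℝ :=
  fun i k => entryA α T (i.1 + 1) (k.1 + 1)

noncomputable def cvec (α : ℝ) (T : ℕ) : Fin T → ℝ :=
  fun k => if (k : ℕ) = 0 then 1 else 1 - α

lemma mulVec_cvec (α : ℝ) (T : ℕ) (hT : 1 ≤ T) :
    (Amat α T).mulVec (cvec α T)
      = fun i : Fin T => if (i : ℕ) = 0 then (1 + (α - 1) ^ 2 * ((T : ℝ) - 1)) / 2 else 0 := by
  funext i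
  have key := rowS α T (i.1 + 1) (by omega) (by omega)
  show ∑ k : Fin T, Amat α T i k * cvec α T k = _
  unfold Amat cvec
  rw [Fin.sum_univ_eq_sum_range (fun m => entryA α T (i.1 + 1) (m + 1)
    * (if m = 0 then (1 : ℝ) else 1 - α)) T]
  have h1 : ∑ m ∈ range T, entryA α T (i.1 + 1) (m + 1) * (if m = 0 then (1:ℝ) else 1 - α)
      = ∑ k ∈ Icc 1 T, entryA α T (i.1 + 1) k * (if k = 1 then (1:ℝ) else 1 - α) := by
    rw [sum_Icc_range (fun k => entryA α T (i.1 + 1) k * (if k = 1 then (1:ℝ) else 1 - α)) 1 T,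
      show T + 1 - 1 = T from by omega]
    refine Finset.sum_congr rfl (fun m _ => ?_)
    rw [show 1 + m = m + 1 from by omega]
    by_cases h : m = 0
    · subst h; norm_num
    · rw [if_neg h, if_neg (by omega)]
  have h2 : ∑ k ∈ Icc 1 T, entryA α T (i.1 + 1) k * (if k = 1 then (1:ℝ) else 1 - α)
      = entryA α T (i.1 + 1) 1 + (1 - α) * (∑ k ∈ Icc 2 T, entryA α T (i.1 + 1) k) := by
    rw [Icc_bot (fun k => entryA α T (i.1 + 1) k * (if k = 1 then (1:ℝ) else 1 - α)) 1 T hT]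
    rw [if_pos rfl, mul_one, Finset.mul_sum]
    congr 1
    refine Finset.sum_congr rfl (fun k hk => ?_)
    rw [Finset.mem_Icc] at hk
    rw [if_neg (by omega)]
    ring
  rw [h1, h2, key]
  by_cases h : i.1 = 0
  · rw [if_pos (by omega : i.1 + 1 = 1), if_pos h]
  · rw [if_neg (by omega : ¬ i.1 + 1 = 1), if_neg h]

lemma det_step (α : ℝ) (T : ℕ) (hT : 1 ≤ T) :
    (Amat α (T + 1)).det
      = ((1 + (α - 1) ^ 2 * (((T + 1 : ℕ) : ℝ) - 1)) / 2) * (Amat α T).det := by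
  set c : ℝ := (1 + (α - 1) ^ 2 * (((T + 1 : ℕ) : ℝ) - 1)) / 2 with hc
  set M : Matrix (Fin (T + 1)) (Fin (T + 1)) ℝ :=
    fun j k => if (k : ℕ) = 0 then cvec α (T + 1) j else if j = k then 1 else 0 with hMdef
  set B : Matrix (Fin (T + 1)) (Fin (T + 1)) ℝ :=
    fun j k => if (k : ℕ) = 0 then (if (j : ℕ) = 0 then c else 0) else Amat α (T + 1) j k
    with hBdef
  have hM : M.det = 1 := by
    rw [Matrix.det_of_lowerTriangular M (fun i j hij => by
      have hij' : (i : ℕ) < (j : ℕ) := hij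
      simp only [hMdef]
      rw [if_neg (by omega : ¬ (j : ℕ) = 0), if_neg (by
        intro h
        rw [h] at hij
        exact lt_irrefl _ hij)]
      )]
    apply Finset.prod_eq_one
    intro i _
    simp only [hMdef]
    by_cases h : (i : ℕ) = 0
    · rw [if_pos h]
      unfold cvec
      rw [if_pos h]
    · simp [h]
  have hAM : Amat α (T + 1) * M = B := by
    funext j k
    rw [Matrix.mul_apply]
    by_cases h : (k : ℕ) = 0
    · have hv := congrFun (mulVec_cvec α (T + 1) (by omega)) j
      simp only [Matrix.mulVec, dotProduct] at hv
      simp only [hMdef, hBdef, h, if_true, if_pos h]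
      exact hv
    · simp only [hMdef, hBdef, h, if_false, if_neg h, mul_ite, mul_one, mul_zero]
      rw [Finset.sum_ite_eq' Finset.univ k (fun l => Amat α (T + 1) j l)]
      rw [if_pos (Finset.mem_univ k)]
  have hsub : B.submatrix Fin.succ Fin.succ = Amat α T := by
    funext j k
    simp only [hBdef, Matrix.submatrix_apply]
    show (if ((k.succ : Fin (T+1)) : ℕ) = 0 then (if ((j.succ : Fin (T+1)) : ℕ) = 0 then c else 0)
      else Amat α (T + 1) j.succ k.succ) = _
    rw [if_neg (by simp [Fin.val_succ] : ¬ ((k.succ : Fin (T+1)) : ℕ) = 0)]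
    show entryA α (T + 1) (j.succ.1 + 1) (k.succ.1 + 1) = entryA α T (j.1 + 1) (k.1 + 1)
    simp only [Fin.val_succ]
    have h := entryA_shift α T (j.1 + 1) (k.1 + 1) (by omega) (by omega) (by omega) (by omega)
    convert h using 2 <;> omega
  have hdet1 : (Amat α (T + 1)).det = B.det := by
    rw [← hAM, Matrix.det_mul, hM, mul_one]
  rw [hdet1, Matrix.det_succ_column_zero]
  rw [Finset.sum_eq_single (0 : Fin (T + 1))]
  · have hB0 : B 0 0 = c := by simp [hBdef]
    rw [Fin.succAbove_zero, hsub, hB0]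
    norm_num
  · intro i _ hi
    have h0 : ¬ (i : ℕ) = 0 := fun h => hi (Fin.ext h)
    have : B i 0 = 0 := by simp [hBdef, h0, hi]
    rw [this]
    ring
  · intro h
    exact absurd (Finset.mem_univ _) h

lemma det_pos (α : ℝ) : ∀ T, 1 ≤ T → 0 < (Amat α T).det := by
  intro T
  induction T with
  | zero => omega
  | succ n ih =>
    intro _
    by_cases h : n = 0
    · subst h
      rw [show (Amat α 1).det = Amat α 1 0 0 from Matrix.det_fin_one _]
      show (0 : ℝ) < entryA α 1 (0 + 1) (0 + 1)
      unfold entryA entryLow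
      norm_num
    · rw [det_step α n (by omega)]
      apply mul_pos
      · have h2 : (((n + 1 : ℕ) : ℝ) - 1) = (n : ℝ) := by push_cast; ring
        rw [h2]
        have h1 : (0 : ℝ) ≤ (α - 1) ^ 2 * (n : ℝ) := by positivity
        linarith
      · exact ih (by omega)

/-- The (1,1) entry of A_T⁻¹ equals 2/(1 + β²(T-1)). -/
theorem inverse_entry (α : ℝ) (T : ℕ) (hT : 1 ≤ T) (h0 : 0 < T) :
    (Amat α T)⁻¹ ⟨0, h0⟩ ⟨0, h0⟩ = 2 / (1 + (α - 1) ^ 2 * ((T : ℝ) - 1)) := by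
  have hpos := det_pos α T hT
  have hu : IsUnit (Amat α T).det := isUnit_iff_ne_zero.mpr (ne_of_gt hpos)
  have hinv := Matrix.nonsing_inv_mul (Amat α T) hu
  have h3 : (Amat α T)⁻¹.mulVec ((Amat α T).mulVec (cvec α T)) = cvec α T := by
    rw [Matrix.mulVec_mulVec, hinv, Matrix.one_mulVec]
  rw [mulVec_cvec α T hT] at h3
  have h4 := congrFun h3 ⟨0, h0⟩
  simp only [Matrix.mulVec, dotProduct] at h4
  have h5 : ∑ k : Fin T, (Amat α T)⁻¹ ⟨0, h0⟩ k
        * (if (k : ℕ) = 0 then (1 + (α - 1) ^ 2 * ((T : ℝ) - 1)) / 2 else 0)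
      = (Amat α T)⁻¹ ⟨0, h0⟩ ⟨0, h0⟩ * ((1 + (α - 1) ^ 2 * ((T : ℝ) - 1)) / 2) := by
    rw [Finset.sum_eq_single (⟨0, h0⟩ : Fin T)]
    · rw [if_pos rfl]
    · intro i _ hi
      rw [if_neg (fun hh => hi (Fin.ext hh)), mul_zero]
    · intro hh
      exact absurd (Finset.mem_univ _) hh
  rw [h5] at h4
  have hcv : cvec α T ⟨0, h0⟩ = 1 := by
    unfold cvec
    rw [if_pos rfl]
  rw [hcv] at h4
  have h6 : (0 : ℝ) ≤ (α - 1) ^ 2 * ((T : ℝ) - 1) := by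
    apply mul_nonneg (sq_nonneg _)
    have : (1 : ℝ) ≤ (T : ℝ) := by exact_mod_cast hT
    linarith
  have hden : (1 + (α - 1) ^ 2 * ((T : ℝ) - 1)) ≠ 0 := by
    intro hh
    nlinarith
  rw [eq_div_iff hden]
  linear_combination 2 * h4
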